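/- (Soundness of Reduction Rule 4 for Cut-MWBS.) Let (G, w, ℰ) be an instance of Cut-MWBS in which the good vertices are pairwise non-adjacent and every good vertex is incident to exactly one dart. Let v be a bad vertex, S a good edge-section of v, and ℰᵢ ∈ ℰ a part with ℰᵢ ⊆ S such that the darts at v of the edges of ℰᵢ form a consecutive arc within S and either all edges of ℰᵢ are directed into v or all are directed out of v. Fix e ∈ ℰᵢ, and let (G', w', ℰ') be obtained by deleting all edges of ℰᵢ except e together with their pendant good endpoints, setting w'(e) = ∑_{f ∈ ℰᵢ} w(f) and w' = w on all other edges, and replacing the part ℰᵢ of ℰ by {e}. Then Cut-MBW(G', w', ℰ') = Cut-MBW(G, w, ℰ). -/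

import Mathlib

open scoped Classical

/-- An embedded digraph: a finite edge set `edges` within an ambient type `E`,
maps `tail, head : E → V` with `tail e ≠ head e` for edges, and for each vertex a
cyclic ordering `rot v` (a list, considered up to rotation) containing exactly once
each dart at `v`.  A dart is a pair `(e, b)` where `b = true` marks the in-dart
(with `head e = v`) and `b = false` the out-dart (with `tail e = v`). -/
structure EmbDigraph (V : Type*) (E : Type*) where
  edges : Finset E
  tail : E → V
  head : E → V
  tail_ne_head : ∀ e ∈ edges, tail e ≠ head e
  rot : V → List (E × Bool)
  rot_nodup : ∀ u : V, (rot u).Nodup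
  mem_rot : ∀ (u : V) (d : E × Bool),
    d ∈ rot u ↔ d.1 ∈ edges ∧ ((d.2 = true ∧ head d.1 = u) ∨ (d.2 = false ∧ tail d.1 = u))

namespace EmbDigraph

variable {V : Type*} {E : Type*}

/-- A list of booleans consisting of a block of `true`s followed by a block of
`false`s: all in-darts precede all out-darts. -/
def IsTwoBlock (l : List Bool) : Prop :=
  ∃ a b : ℕ, l = List.replicate a true ++ List.replicate b false

/-- Vertex `u` is bimodal in the spanning subgraph `G[F]`: some rotation of its
dart list, restricted to the darts of edges in `F`, has all in-darts preceding all
out-darts. -/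
def VertexBimodalIn (G : EmbDigraph V E) (F : Finset E) (u : V) : Prop :=
  ∃ n : ℕ,
    IsTwoBlock ((((G.rot u).rotate n).filter fun d => decide (d.1 ∈ F)).map Prod.snd)

/-- The spanning subgraph `G[F]` is bimodal: every vertex is bimodal in it. -/
def BimodalIn (G : EmbDigraph V E) (F : Finset E) : Prop :=
  ∀ u : V, G.VertexBimodalIn F u

/-- A vertex is good if it is bimodal in `G` itself; otherwise it is bad. -/
def Good (G : EmbDigraph V E) (u : V) : Prop :=
  G.VertexBimodalIn G.edges u

/-- `m` is the maximum weight `MBW(G, w)` of a bimodal spanning subgraph of `G`. -/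
def IsMBW (G : EmbDigraph V E) (w : E → ℚ) (m : ℚ) : Prop :=
  IsGreatest {x : ℚ | ∃ F : Finset E, F ⊆ G.edges ∧ G.BimodalIn F ∧ ∑ e ∈ F, w e = x} m

end EmbDigraph

namespace EmbDigraph

variable {V : Type*} {E : Type*}

/-- The darts at `v` of the edges of `S` form a consecutive arc in the cyclic
ordering at `v`. -/
def ArcAt (G : EmbDigraph V E) (v : V) (S : Set E) : Prop :=
  ∃ n k : ℕ, ∀ d ∈ G.rot v, (d ∈ ((G.rot v).rotate n).take k ↔ d.1 ∈ S)

/-- `T ⊆ S` and the darts at `v` of the edges of `T` form a consecutive arc within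
the arc formed by the darts of `S` in the cyclic ordering at `v`. -/
def ArcWithin (G : EmbDigraph V E) (v : V) (S T : Set E) : Prop :=
  T ⊆ S ∧ ∃ n k a b : ℕ, a ≤ b ∧ b ≤ k ∧
    (∀ d ∈ G.rot v, (d ∈ ((G.rot v).rotate n).take k ↔ d.1 ∈ S)) ∧
    (∀ d ∈ G.rot v, (d ∈ (((G.rot v).rotate n).take b).drop a ↔ d.1 ∈ T))

/-- `S` is a set of edges incident to `v` whose darts at `v` form a consecutive arc
in the cyclic ordering at `v` and such that the endpoint other than `v` of every
edge of `S` is good. -/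
def SectionProps (G : EmbDigraph V E) (v : V) (S : Set E) : Prop :=
  S ⊆ ↑G.edges ∧ (∀ e ∈ S, G.tail e = v ∨ G.head e = v) ∧
    (∀ e ∈ S, G.Good (if G.tail e = v then G.head e else G.tail e)) ∧
    G.ArcAt v S

/-- A good edge-section of `v`: a maximal set of edges incident to `v` whose darts
at `v` form a consecutive arc and whose other endpoints are all good. -/
def GoodEdgeSection (G : EmbDigraph V E) (v : V) (S : Set E) : Prop :=
  G.SectionProps v S ∧ ∀ S' : Set E, S ⊆ S' → G.SectionProps v S' → S' = S

end EmbDigraph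

namespace EmbDigraph

variable {V : Type*} {E : Type*}

/-- `𝓔` is a partition of the edge set of `G` into nonempty parts. -/
def IsEdgePartition (G : EmbDigraph V E) (𝓔 : Finset (Finset E)) : Prop :=
  (∀ P ∈ 𝓔, P.Nonempty ∧ P ⊆ G.edges) ∧
    (∀ P ∈ 𝓔, ∀ Q ∈ 𝓔, P ≠ Q → Disjoint P Q) ∧
    (∀ e ∈ G.edges, ∃ P ∈ 𝓔, e ∈ P)

/-- `F` is feasible for the Cut-MWBS instance `(G, w, 𝓔)`: `F` is a union of parts
of `𝓔` and `G[F]` is bimodal. -/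
def CutFeasible (G : EmbDigraph V E) (𝓔 : Finset (Finset E)) (F : Finset E) : Prop :=
  F ⊆ G.edges ∧ (∀ P ∈ 𝓔, P ⊆ F ∨ Disjoint P F) ∧ G.BimodalIn F

/-- `m` is the maximum weight `Cut-MBW(G, w, 𝓔)` over feasible sets of the
Cut-MWBS instance `(G, w, 𝓔)`. -/
def IsCutMBW (G : EmbDigraph V E) (w : E → ℚ) (𝓔 : Finset (Finset E)) (m : ℚ) : Prop :=
  IsGreatest {x : ℚ | ∃ F : Finset E, G.CutFeasible 𝓔 F ∧ ∑ e ∈ F, w e = x} m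

end EmbDigraph

open EmbDigraph

namespace CutRed
open List

lemma twoBlock_iff_pairwise (L : List Bool) :
    EmbDigraph.IsTwoBlock L ↔ L.Pairwise (fun a b => b ≤ a) := by
  constructor
  · rintro ⟨a, b, rfl⟩
    rw [List.pairwise_append]
    refine ⟨(List.pairwise_replicate).2 (Or.inr le_rfl),
      (List.pairwise_replicate).2 (Or.inr le_rfl), ?_⟩
    intro x hx y hy
    rw [List.eq_of_mem_replicate hx, List.eq_of_mem_replicate hy]
    exact Bool.false_le true
  · intro h
    induction L with
    | nil => exact ⟨0, 0, rfl⟩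
    | cons x L ih =>
      rw [List.pairwise_cons] at h
      obtain ⟨a, b, hL⟩ := ih h.2
      cases x with
      | true => exact ⟨a + 1, b, by rw [List.replicate_succ, hL]; rfl⟩
      | false =>
        refine ⟨0, L.length + 1, ?_⟩
        have hall : ∀ y ∈ L, y = false := fun y hy =>
          le_antisymm (h.1 y hy) (Bool.false_le y)
        simp only [List.replicate_zero, List.nil_append, List.replicate_succ]
        exact List.cons_eq_cons.mpr ⟨rfl, List.eq_replicate_iff.2 ⟨by simp, hall⟩⟩

/-- Cyclically two-block boolean lists. -/
def CTB (L : List Bool) : Prop := ∃ n, EmbDigraph.IsTwoBlock (L.rotate n)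

lemma ctb_iff_split (L : List Bool) :
    CTB L ↔ ∃ X Y, L = X ++ Y ∧ EmbDigraph.IsTwoBlock (Y ++ X) := by
  constructor
  · rintro ⟨n, hn⟩
    rcases List.eq_nil_or_concat L with rfl | hL
    · exact ⟨[], [], rfl, by simpa using hn⟩
    have hpos : 0 < L.length := by
      obtain ⟨a, b, rfl⟩ := hL; simp
    rw [← List.rotate_mod] at hn
    have hle : n % L.length ≤ L.length := le_of_lt (Nat.mod_lt _ hpos)
    rw [List.rotate_eq_drop_append_take hle] at hn
    exact ⟨L.take (n % L.length), L.drop (n % L.length), (List.take_append_drop _ L).symm, hn⟩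
  · rintro ⟨X, Y, rfl, h⟩
    exact ⟨X.length, by rwa [List.rotate_append_length_eq]⟩

lemma ctb_of_sublist {L L' : List Bool} (hs : List.Sublist L' L) (h : CTB L) : CTB L' := by
  rw [ctb_iff_split] at h ⊢
  obtain ⟨X, Y, rfl, h⟩ := h
  obtain ⟨X', Y', rfl, hX, hY⟩ := List.sublist_append_iff.1 hs
  refine ⟨X', Y', rfl, ?_⟩
  rw [twoBlock_iff_pairwise] at h ⊢
  exact h.sublist (hY.append hX)

lemma ctb_rotate_iff {L L' : List Bool} (h : L ~r L') : (CTB L ↔ CTB L') := by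
  constructor
  · intro hc
    obtain ⟨n, rfl⟩ := h.symm
    obtain ⟨m, hm⟩ := hc
    exact ⟨_, by rwa [List.rotate_rotate] at hm⟩
  · intro hc
    obtain ⟨n, rfl⟩ := h
    obtain ⟨m, hm⟩ := hc
    exact ⟨_, by rwa [List.rotate_rotate] at hm⟩

lemma pairwise_pump {X Y : List Bool} {x : Bool} (k : ℕ)
    (h : List.Pairwise (fun a b => b ≤ a) (X ++ x :: Y)) :
    List.Pairwise (fun a b => b ≤ a) (X ++ (List.replicate k x ++ Y)) := by
  rw [List.pairwise_append] at h
  obtain ⟨hX, hxy, hcross⟩ := h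
  rw [List.pairwise_cons] at hxy
  rw [List.pairwise_append, List.pairwise_append]
  refine ⟨hX, ⟨(List.pairwise_replicate).2 (Or.inr le_rfl), hxy.2, ?_⟩, ?_⟩
  · intro a ha b hb
    rw [List.eq_of_mem_replicate ha]
    exact hxy.1 b hb
  · intro a ha b hb
    rcases List.mem_append.1 hb with hb | hb
    · rw [List.eq_of_mem_replicate hb]
      exact hcross a ha x List.mem_cons_self
    · exact hcross a ha b (List.mem_cons_of_mem _ hb)

lemma ctb_pump {X Y : List Bool} {x : Bool} (k : ℕ)
    (h : CTB (X ++ x :: Y)) : CTB (X ++ (List.replicate k x ++ Y)) := by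
  rw [ctb_iff_split] at h
  obtain ⟨A, B, hAB, h2⟩ := h
  rw [twoBlock_iff_pairwise] at h2
  rw [ctb_iff_split]
  rcases List.append_eq_append_iff.1 hAB with ⟨A', hXA, hA'⟩ | ⟨C', hAC, hC'⟩
  · cases A' with
    | nil =>
      rw [List.append_nil] at hXA
      simp only [List.nil_append] at hA'
      refine ⟨X, List.replicate k x ++ Y, rfl, ?_⟩
      rw [twoBlock_iff_pairwise]
      have h3 : List.Pairwise (fun a b => b ≤ a) ([] ++ x :: (Y ++ X)) := by
        rw [hXA, ← hA'] at h2
        simpa [List.append_assoc] using h2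
      simpa [List.append_assoc] using pairwise_pump k h3
    | cons a A'' =>
      rw [List.cons_append] at hA'
      injection hA' with h1 h2'
      subst h1
      subst h2'
      refine ⟨X ++ (List.replicate k x ++ A''), B, by simp, ?_⟩
      rw [twoBlock_iff_pairwise]
      have h3 : List.Pairwise (fun a b => b ≤ a) ((B ++ X) ++ x :: A'') := by
        rw [hXA] at h2
        simpa [List.append_assoc] using h2
      simpa [List.append_assoc] using pairwise_pump k h3
  · subst hAC
    subst hC'
    refine ⟨A, C' ++ (List.replicate k x ++ Y), by simp, ?_⟩
    rw [twoBlock_iff_pairwise]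
    have h3 : List.Pairwise (fun a b => b ≤ a) (C' ++ x :: (Y ++ A)) := by
      simpa [List.append_assoc] using h2
    simpa [List.append_assoc] using pairwise_pump k h3

lemma exists_first {α : Type*} (p : α → Bool) (l : List α) (h : l.filter p ≠ []) :
    ∃ A x B, l = A ++ x :: B ∧ p x = true ∧ A.filter p = [] := by
  induction l with
  | nil => simp at h
  | cons y l ih =>
    by_cases hy : p y = true
    · exact ⟨[], y, l, rfl, hy, rfl⟩
    · rw [List.filter_cons_of_neg (by simpa using hy)] at h
      obtain ⟨A, x, B, rfl, hx, hA⟩ := ih h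
      exact ⟨y :: A, x, B, rfl, hx,
        by rw [List.filter_cons_of_neg (by simpa using hy)]; exact hA⟩

lemma filter_rotate_one {α : Type*} (p : α → Bool) (l : List α) (h : l.filter p ≠ []) :
    ∃ k, (l.rotate k).filter p = (l.filter p).rotate 1 := by
  obtain ⟨A, x, B, rfl, hx, hA⟩ := exists_first p _ h
  refine ⟨A.length + 1, ?_⟩
  have hle : A.length + 1 ≤ (A ++ x :: B).length := by simp
  rw [List.rotate_eq_drop_append_take hle]
  have hsplit : A ++ x :: B = (A ++ [x]) ++ B := by simp
  have hlen : A.length + 1 = (A ++ [x]).length := by simp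
  have hdrop : (A ++ x :: B).drop (A.length + 1) = B := by
    rw [hsplit, hlen]; exact List.drop_left
  have htake : (A ++ x :: B).take (A.length + 1) = A ++ [x] := by
    rw [hsplit, hlen]; exact List.take_left
  rw [hdrop, htake]
  have hfl : (A ++ x :: B).filter p = x :: B.filter p := by
    simp [List.filter_append, hA, List.filter_cons, hx]
  rw [hfl]
  have hrot : (x :: B.filter p).rotate 1 = B.filter p ++ [x] := by
    rw [List.rotate_cons_succ, List.rotate_zero]
  rw [hrot]
  simp [List.filter_append, hA, List.filter_cons, hx]

lemma exists_rotate_filter_eq {α : Type*} (p : α → Bool) (l : List α) (m : ℕ) :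
    ∃ n, (l.rotate n).filter p = (l.filter p).rotate m := by
  induction m with
  | zero => exact ⟨0, by simp⟩
  | succ m ih =>
    obtain ⟨n, hn⟩ := ih
    by_cases hf : l.filter p = []
    · exact ⟨n, by rw [hn, hf]; simp⟩
    · have hf' : (l.rotate n).filter p ≠ [] := by
        rw [hn]
        exact fun hcon => hf (List.rotate_eq_nil_iff.1 hcon)
      obtain ⟨k, hk⟩ := filter_rotate_one p (l.rotate n) hf'
      refine ⟨n + k, ?_⟩
      rw [← List.rotate_rotate, hk, hn, List.rotate_rotate]

lemma filter_rotate_comm {α : Type*} (p : α → Bool) (l : List α) (n : ℕ) :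
    ∃ m, (l.rotate n).filter p = (l.filter p).rotate m := by
  rcases List.eq_nil_or_concat l with rfl | hcl
  · exact ⟨0, by simp⟩
  have hpos : 0 < l.length := by obtain ⟨a, b, rfl⟩ := hcl; simp
  have hle : n % l.length ≤ l.length := le_of_lt (Nat.mod_lt _ hpos)
  refine ⟨((l.take (n % l.length)).filter p).length, ?_⟩
  rw [← List.rotate_mod, List.rotate_eq_drop_append_take hle, List.filter_append]
  have hsplit : l.filter p
      = (l.take (n % l.length)).filter p ++ (l.drop (n % l.length)).filter p := by
    conv_lhs => rw [← List.take_append_drop (n % l.length) l]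
    rw [List.filter_append]
  rw [hsplit, List.rotate_append_length_eq]

lemma vertexBimodal_iff_ctb {V E : Type*} (G : EmbDigraph V E) (F : Finset E) (u : V) :
    G.VertexBimodalIn F u ↔
      CTB (((G.rot u).filter fun d => decide (d.1 ∈ F)).map Prod.snd) := by
  constructor
  · rintro ⟨n, hn⟩
    obtain ⟨m, hm⟩ := filter_rotate_comm (fun d => decide (d.1 ∈ F)) (G.rot u) n
    rw [hm, List.map_rotate] at hn
    exact ⟨m, hn⟩
  · rintro ⟨m, hm⟩
    obtain ⟨n, hn⟩ := exists_rotate_filter_eq (fun d => decide (d.1 ∈ F)) (G.rot u) m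
    exact ⟨n, by rw [hn, List.map_rotate]; exact hm⟩

lemma ctb_short (L : List Bool) (h : L.length ≤ 1) : CTB L := by
  rcases L with _ | ⟨x, _ | ⟨y, t⟩⟩
  · exact ⟨0, 0, 0, rfl⟩
  · cases x
    · exact ⟨0, 0, 1, rfl⟩
    · exact ⟨0, 1, 0, rfl⟩
  · simp at h

lemma filter_eq_singleton {α : Type*} {l : List α} (hn : l.Nodup) {x : α} (hx : x ∈ l)
    (p : α → Bool) (hp : ∀ d ∈ l, (p d = true ↔ d = x)) : l.filter p = [x] := by
  induction l with
  | nil => simp at hx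
  | cons y l ih =>
    rcases List.mem_cons.1 hx with rfl | hx'
    · rw [List.filter_cons_of_pos ((hp x List.mem_cons_self).2 rfl)]
      have hnil : l.filter p = [] := by
        rw [List.filter_eq_nil_iff]
        intro d hd hpd
        have hdx : d = x := (hp d (List.mem_cons_of_mem _ hd)).1 hpd
        exact (List.nodup_cons.1 hn).1 (hdx ▸ hd)
      rw [hnil]
    · have hy : ¬(p y = true) := fun hpt => by
        have : y = x := (hp y List.mem_cons_self).1 hpt
        exact (List.nodup_cons.1 hn).1 (this ▸ hx')
      rw [List.filter_cons_of_neg hy]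
      exact ih (List.nodup_cons.1 hn).2 hx' (fun d hd => hp d (List.mem_cons_of_mem _ hd))

lemma filter_sublist_mono {α : Type*} {l : List α} {p q : α → Bool}
    (h : ∀ x ∈ l, p x = true → q x = true) : List.Sublist (l.filter p) (l.filter q) := by
  induction l with
  | nil => simp
  | cons y l ih =>
    have ih' := ih (fun x hx => h x (List.mem_cons_of_mem _ hx))
    by_cases hp : p y = true
    · rw [List.filter_cons_of_pos hp, List.filter_cons_of_pos (h y List.mem_cons_self hp)]
      exact ih'.cons₂ y
    · rw [List.filter_cons_of_neg hp]
      by_cases hq : q y = true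
      · rw [List.filter_cons_of_pos hq]
        exact ih'.cons y
      · rw [List.filter_cons_of_neg hq]
        exact ih'

lemma vertexBimodal_mono {V E : Type*} (G : EmbDigraph V E) {F F' : Finset E}
    (hsub : F' ⊆ F) (u : V) (h : G.VertexBimodalIn F u) : G.VertexBimodalIn F' u := by
  classical
  rw [vertexBimodal_iff_ctb] at h ⊢
  refine ctb_of_sublist (List.Sublist.map _ ?_) h
  exact filter_sublist_mono (fun d _ hd => by simpa using hsub (by simpa using hd))

lemma ctb_transfer {V E : Type*} (G G' : EmbDigraph V E) (Ei : Finset E) (e : E)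
    (hrot : ∀ u : V, ∃ n : ℕ,
      G'.rot u = ((G.rot u).filter fun d => decide (d.1 ∉ Ei.erase e)).rotate n)
    (F₀ : Finset E) (hdisj : ∀ f ∈ F₀, f ∉ Ei.erase e) (u : V) :
    (G.VertexBimodalIn F₀ u ↔ G'.VertexBimodalIn F₀ u) := by
  classical
  rw [vertexBimodal_iff_ctb, vertexBimodal_iff_ctb]
  obtain ⟨n₀, h0⟩ := hrot u
  obtain ⟨m, hm⟩ := filter_rotate_comm (fun d => decide (d.1 ∈ F₀))
    ((G.rot u).filter fun d => decide (d.1 ∉ Ei.erase e)) n₀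
  have hff : (((G.rot u).filter fun d => decide (d.1 ∉ Ei.erase e)).filter
        fun d => decide (d.1 ∈ F₀))
      = (G.rot u).filter fun d => decide (d.1 ∈ F₀) := by
    rw [List.filter_filter]
    refine List.filter_congr ?_
    intro d _
    by_cases hd : d.1 ∈ F₀
    · simp [hd, hdisj d.1 hd]
    · simp [hd]
  rw [h0, hm, hff, List.map_rotate]
  exact (ctb_rotate_iff ⟨m, rfl⟩)

lemma vertexBimodal_of_short {V E : Type*} (G : EmbDigraph V E) (F : Finset E) (u : V)
    (h : (G.rot u).length ≤ 1) : G.VertexBimodalIn F u := by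
  classical
  rw [vertexBimodal_iff_ctb]
  apply ctb_short
  rw [List.length_map]
  exact le_trans (List.length_filter_le _ _) h

lemma v_case {V E : Type*} (G : EmbDigraph V E)
    (v : V) (Ei : Finset E) (e : E) (he : e ∈ Ei)
    (b : Bool)
    (hb : ∀ d ∈ G.rot v, d.1 ∈ Ei → d.2 = b)
    (hde : (e, b) ∈ G.rot v)
    (harc : ∃ n a bb : ℕ, ∀ d ∈ G.rot v,
      (d ∈ (((G.rot v).rotate n).take bb).drop a ↔ d.1 ∈ Ei))
    (F' : Finset E) (heF' : e ∈ F') (hdisj : ∀ f ∈ F', f ∉ Ei.erase e)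
    (h : G.VertexBimodalIn F' v) :
    G.VertexBimodalIn (F' ∪ Ei) v := by
  classical
  obtain ⟨n, a, bb, hD⟩ := harc
  rw [vertexBimodal_iff_ctb] at h ⊢
  obtain ⟨m1, hm1⟩ := filter_rotate_comm (fun d => decide (d.1 ∈ F')) (G.rot v) n
  obtain ⟨m2, hm2⟩ := filter_rotate_comm (fun d => decide (d.1 ∈ F' ∪ Ei)) (G.rot v) n
  have hctbr : CTB ((((G.rot v).rotate n).filter fun d => decide (d.1 ∈ F')).map Prod.snd) := by
    rw [hm1, List.map_rotate]
    exact (ctb_rotate_iff ⟨m1, rfl⟩).1 h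
  have hgoal : CTB ((((G.rot v).rotate n).filter
      fun d => decide (d.1 ∈ F' ∪ Ei)).map Prod.snd) →
      CTB (((G.rot v).filter fun d => decide (d.1 ∈ F' ∪ Ei)).map Prod.snd) := by
    intro hc
    rw [hm2, List.map_rotate] at hc
    exact (ctb_rotate_iff ⟨m2, rfl⟩).2 hc
  apply hgoal
  have hnr : ((G.rot v).rotate n).Nodup := (List.nodup_rotate).2 (G.rot_nodup v)
  have hrl : ∀ d ∈ (G.rot v).rotate n, d ∈ G.rot v := fun d hd => (List.mem_rotate).1 hd
  obtain ⟨A, hA⟩ : ∃ A, (((G.rot v).rotate n).take bb).take a = A := ⟨_, rfl⟩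
  obtain ⟨D, hDeq⟩ : ∃ D, (((G.rot v).rotate n).take bb).drop a = D := ⟨_, rfl⟩
  obtain ⟨C, hCeq⟩ : ∃ C, ((G.rot v).rotate n).drop bb = C := ⟨_, rfl⟩
  rw [hDeq] at hD
  have hsplit : (G.rot v).rotate n = A ++ D ++ C := by
    rw [← hA, ← hDeq, ← hCeq, List.take_append_drop, List.take_append_drop]
  have hmemr : ∀ {d : E × Bool}, d ∈ A ∨ d ∈ D ∨ d ∈ C → d ∈ (G.rot v).rotate n := by
    intro d hd
    rw [hsplit, List.mem_append, List.mem_append]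
    tauto
  have hDmem : ∀ d ∈ D, d.1 ∈ Ei := by
    intro d hd
    exact (hD d (hrl d (hmemr (Or.inr (Or.inl hd))))).1 hd
  have hnodup : (A ++ D ++ C).Nodup := hsplit ▸ hnr
  have hAD : (A ++ D).Nodup := (List.nodup_append.1 hnodup).1
  have hADC : List.Disjoint (A ++ D) C := fun _ ha hb => (List.nodup_append.1 hnodup).2.2 _ ha _ hb rfl
  have hADdisj : List.Disjoint A D := fun _ ha hb => (List.nodup_append.1 hAD).2.2 _ ha _ hb rfl
  have hDnodup : D.Nodup := (List.nodup_append.1 hAD).2.1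
  have hAmem : ∀ d ∈ A, d.1 ∉ Ei := by
    intro d hdA hdEi
    exact hADdisj hdA ((hD d (hrl d (hmemr (Or.inl hdA)))).2 hdEi)
  have hCmem : ∀ d ∈ C, d.1 ∉ Ei := by
    intro d hdC hdEi
    exact hADC (List.mem_append.2 (Or.inr
      ((hD d (hrl d (hmemr (Or.inr (Or.inr hdC))))).2 hdEi))) hdC
  have hfA : A.filter (fun d => decide (d.1 ∈ F' ∪ Ei)) = A.filter (fun d => decide (d.1 ∈ F')) :=
    List.filter_congr fun d hd => decide_eq_decide.2 (by simp [Finset.mem_union, hAmem d hd])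
  have hfC : C.filter (fun d => decide (d.1 ∈ F' ∪ Ei)) = C.filter (fun d => decide (d.1 ∈ F')) :=
    List.filter_congr fun d hd => decide_eq_decide.2 (by simp [Finset.mem_union, hCmem d hd])
  have hfD : D.filter (fun d => decide (d.1 ∈ F' ∪ Ei)) = D :=
    List.filter_eq_self.2 fun d hd => by simp [Finset.mem_union, hDmem d hd]
  have hDe : (e, b) ∈ D := (hD (e, b) hde).2 he
  have hfD' : D.filter (fun d => decide (d.1 ∈ F')) = [(e, b)] := by
    apply filter_eq_singleton hDnodup hDe
    intro d hd
    constructor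
    · intro hp
      have h1 : d.1 ∈ F' := by simpa using hp
      have h2 : d.1 ∈ Ei := hDmem d hd
      have h3 : d.1 = e := by
        by_contra hne
        exact hdisj d.1 h1 (Finset.mem_erase.2 ⟨hne, h2⟩)
      have h4 : d.2 = b := hb d (hrl d (hmemr (Or.inr (Or.inl hd)))) h2
      exact Prod.ext h3 h4
    · rintro rfl
      simpa using heF'
  have hmapD : D.map Prod.snd = List.replicate D.length b := by
    refine List.eq_replicate_iff.2 ⟨by simp, ?_⟩
    intro x hx
    obtain ⟨d, hd, rfl⟩ := List.mem_map.1 hx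
    exact hb d (hrl d (hmemr (Or.inr (Or.inl hd)))) (hDmem d hd)
  have hctb' : CTB ((A.filter (fun d => decide (d.1 ∈ F'))).map Prod.snd
      ++ (b :: (C.filter (fun d => decide (d.1 ∈ F'))).map Prod.snd)) := by
    have h2 := hctbr
    rw [hsplit, List.filter_append, List.filter_append, hfD',
      List.map_append, List.map_append] at h2
    simpa [List.append_assoc] using h2
  have hpumped := ctb_pump D.length hctb'
  rw [hsplit, List.filter_append, List.filter_append, hfA, hfC, hfD,
    List.map_append, List.map_append, hmapD]
  simpa [List.append_assoc] using hpumped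

end CutRed

open CutRed

/-- Soundness of Reduction Rule 4 for Cut-MWBS: a part `ℰᵢ ⊆ S` of a good
edge-section `S` of a bad vertex `v`, consecutive within `S` and all-in or all-out,
is replaced by a single representative edge `e ∈ ℰᵢ` carrying the total weight of
`ℰᵢ`; the other edges of `ℰᵢ` are deleted (their pendant good endpoints becoming
isolated).  Then `Cut-MBW(G', w', ℰ') = Cut-MBW(G, w, ℰ)`. -/
theorem cut_reduction_rule_merge {V E : Type*}
    (G G' : EmbDigraph V E) (w : E → ℚ) (hw : ∀ e, 0 ≤ w e)
    (𝓔 : Finset (Finset E)) (hpart : G.IsEdgePartition 𝓔)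
    (hind : ∀ e ∈ G.edges, ¬ (G.Good (G.tail e) ∧ G.Good (G.head e)))
    (hdeg : ∀ u : V, G.Good u → (G.rot u).length = 1)
    (v : V) (hv : ¬ G.Good v) (S : Set E) (hS : G.GoodEdgeSection v S)
    (Ei : Finset E) (hEi : Ei ∈ 𝓔) (hEiS : ↑Ei ⊆ S)
    (harc : G.ArcWithin v S ↑Ei)
    (hdir : (∀ f ∈ Ei, G.head f = v) ∨ (∀ f ∈ Ei, G.tail f = v))
    (e : E) (he : e ∈ Ei)
    (hE' : G'.edges = G.edges \ Ei.erase e)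
    (ht : G'.tail = G.tail) (hh : G'.head = G.head)
    (hrot : ∀ u : V, ∃ n : ℕ,
      G'.rot u = ((G.rot u).filter fun d => decide (d.1 ∉ Ei.erase e)).rotate n)
    (w' : E → ℚ) (hw'e : w' e = ∑ f ∈ Ei, w f) (hw'o : ∀ f : E, f ≠ e → w' f = w f)
    (𝓔' : Finset (Finset E)) (h𝓔' : 𝓔' = insert {e} (𝓔.erase Ei)) :
    ∀ m m' : ℚ, G.IsCutMBW w 𝓔 m → G'.IsCutMBW w' 𝓔' m' → m' = m := by
  classical
  obtain ⟨hparts, hdisj𝓔, hcover⟩ := hpart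
  obtain ⟨⟨Ssub, Sinc, Sgood, Sarc⟩, Smax⟩ := hS
  have hEiE : Ei ⊆ G.edges := (hparts Ei hEi).2
  -- the common boolean direction of the darts of `Ei` at `v`
  obtain ⟨b, hb, hde⟩ : ∃ b : Bool,
      (∀ d ∈ G.rot v, d.1 ∈ Ei → d.2 = b) ∧ (e, b) ∈ G.rot v := by
    rcases hdir with hin | hout
    · refine ⟨true, ?_, ?_⟩
      · intro d hd hdEi
        rcases (G.mem_rot v d).1 hd with ⟨hedge, hca⟩
        rcases hca with ⟨h1, _⟩ | ⟨_, h2⟩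
        · exact h1
        · exact absurd (h2.trans (hin d.1 hdEi).symm) (G.tail_ne_head d.1 hedge)
      · exact (G.mem_rot v (e, true)).2 ⟨hEiE he, Or.inl ⟨rfl, hin e he⟩⟩
    · refine ⟨false, ?_, ?_⟩
      · intro d hd hdEi
        rcases (G.mem_rot v d).1 hd with ⟨hedge, hca⟩
        rcases hca with ⟨_, h2⟩ | ⟨h1, _⟩
        · exact absurd ((hout d.1 hdEi).trans h2.symm) (G.tail_ne_head d.1 hedge)
        · exact h1
      · exact (G.mem_rot v (e, false)).2 ⟨hEiE he, Or.inr ⟨rfl, hout e he⟩⟩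
  -- the arc condition for the darts of `Ei` at `v`
  have harc' : ∃ n a bb : ℕ, ∀ d ∈ G.rot v,
      (d ∈ (((G.rot v).rotate n).take bb).drop a ↔ d.1 ∈ Ei) := by
    obtain ⟨_, n, k, aa, bb2, _, _, _, hTprop⟩ := harc
    exact ⟨n, aa, bb2, fun d hd => (hTprop d hd).trans (by simp)⟩
  -- darts of the erased edges occur only at `v` and at good vertices
  have hnodart : ∀ (u : V), u ≠ v → ¬G.Good u → ∀ d ∈ G.rot u, d.1 ∉ Ei.erase e := by
    intro u huv hgood d hd hdEi
    have hfS : d.1 ∈ S := hEiS (Finset.mem_coe.2 (Finset.mem_of_mem_erase hdEi))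
    rcases (G.mem_rot u d).1 hd with ⟨hedge, hca⟩
    have hgd := Sgood d.1 hfS
    by_cases htf : G.tail d.1 = v
    · rw [if_pos htf] at hgd
      rcases hca with ⟨_, h2⟩ | ⟨_, h2⟩
      · exact hgood (h2 ▸ hgd)
      · exact huv (h2.symm.trans htf)
    · rw [if_neg htf] at hgd
      have hhf : G.head d.1 = v := (Sinc d.1 hfS).resolve_left htf
      rcases hca with ⟨_, h2⟩ | ⟨_, h2⟩
      · exact huv (h2.symm.trans hhf)
      · exact hgood (h2 ▸ hgd)
  intro m m' hm hm'
  have hdirA : m ≤ m' := by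
    obtain ⟨F, ⟨hFE, hFparts, hFbim⟩, hsum⟩ := hm.1
    set F' : Finset E := F \ Ei.erase e with hF'def
    have hF'nE : ∀ f ∈ F', f ∉ Ei.erase e := fun f hf => (Finset.mem_sdiff.1 hf).2
    have hF'F : F' ⊆ F := Finset.sdiff_subset
    have hfeas' : G'.CutFeasible 𝓔' F' := by
      refine ⟨?_, ?_, ?_⟩
      · rw [hE']
        exact fun f hf => Finset.mem_sdiff.2 ⟨hFE (hF'F hf), (Finset.mem_sdiff.1 hf).2⟩
      · intro P hP
        rw [h𝓔', Finset.mem_insert] at hP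
        rcases hP with rfl | hP
        · rcases hFparts Ei hEi with hEiF | hEidisj
          · left
            rw [Finset.singleton_subset_iff, hF'def, Finset.mem_sdiff]
            exact ⟨hEiF he, Finset.notMem_erase e Ei⟩
          · right
            rw [Finset.disjoint_left]
            rintro f hf hf'
            rw [Finset.mem_singleton] at hf
            subst hf
            exact (Finset.disjoint_left.1 hEidisj he) (hF'F hf')
        · obtain ⟨hPne, hP𝓔⟩ := Finset.mem_erase.1 hP
          have hPEi : Disjoint P Ei := hdisj𝓔 P hP𝓔 Ei hEi hPne
          rcases hFparts P hP𝓔 with hPF | hPd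
          · left
            intro f hf
            exact Finset.mem_sdiff.2 ⟨hPF hf, fun hc =>
              (Finset.disjoint_left.1 hPEi hf) (Finset.mem_of_mem_erase hc)⟩
          · right
            exact hPd.mono_right hF'F
      · intro u
        exact (ctb_transfer G G' Ei e hrot F' hF'nE u).1
          (vertexBimodal_mono G hF'F u (hFbim u))
    have hsum' : ∑ f ∈ F', w' f = ∑ f ∈ F, w f := by
      rcases hFparts Ei hEi with hEiF | hEidisj
      · have heF' : e ∈ F' := Finset.mem_sdiff.2 ⟨hEiF he, Finset.notMem_erase e Ei⟩
        have herase : F'.erase e = F \ Ei := by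
          ext f
          simp only [Finset.mem_erase, hF'def, Finset.mem_sdiff]
          constructor
          · rintro ⟨hfe, hfF, hfne⟩
            exact ⟨hfF, fun hc => hfne ⟨hfe, hc⟩⟩
          · rintro ⟨hfF, hfEi⟩
            exact ⟨fun hc => hfEi (hc ▸ he), hfF, fun hc => hfEi hc.2⟩
        calc ∑ f ∈ F', w' f = w' e + ∑ f ∈ F'.erase e, w' f :=
              (Finset.add_sum_erase _ _ heF').symm
          _ = (∑ f ∈ Ei, w f) + ∑ f ∈ F \ Ei, w f := by
              rw [hw'e, herase]
              congr 1
              exact Finset.sum_congr rfl fun f hf =>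
                hw'o f (fun hc => (Finset.mem_sdiff.1 hf).2 (hc ▸ he))
          _ = ∑ f ∈ F, w f := by rw [add_comm]; exact Finset.sum_sdiff hEiF
      · have hFF' : F' = F := by
          rw [hF'def]
          ext f
          simp only [Finset.mem_sdiff, and_iff_left_iff_imp]
          exact fun hf hc =>
            Finset.disjoint_left.1 hEidisj (Finset.mem_of_mem_erase hc) hf
        rw [hFF']
        exact Finset.sum_congr rfl fun f hf =>
          hw'o f (fun hc => Finset.disjoint_left.1 hEidisj he (hc ▸ hf))
    calc m = ∑ f ∈ F, w f := hsum.symm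
      _ = ∑ f ∈ F', w' f := hsum'.symm
      _ ≤ m' := hm'.2 ⟨F', hfeas', rfl⟩
  have hdirB : m' ≤ m := by
    obtain ⟨F', ⟨hF'E, hF'parts, hF'bim⟩, hsum'⟩ := hm'.1
    have hF'nE : ∀ f ∈ F', f ∉ Ei.erase e := by
      intro f hf
      have h0 := hF'E hf
      rw [hE', Finset.mem_sdiff] at h0
      exact h0.2
    have hF'GE : F' ⊆ G.edges := by
      intro f hf
      have h0 := hF'E hf
      rw [hE', Finset.mem_sdiff] at h0
      exact h0.1
    by_cases heF' : e ∈ F'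
    · have hfeas : G.CutFeasible 𝓔 (F' ∪ Ei) := by
        refine ⟨Finset.union_subset hF'GE hEiE, ?_, ?_⟩
        · intro P hP
          by_cases hPEi : P = Ei
          · subst hPEi; left; exact Finset.subset_union_right
          · have hP' : P ∈ 𝓔' := by
              rw [h𝓔']
              exact Finset.mem_insert_of_mem (Finset.mem_erase.2 ⟨hPEi, hP⟩)
            rcases hF'parts P hP' with hPF | hPd
            · left; exact hPF.trans Finset.subset_union_left
            · right
              exact Finset.disjoint_union_right.2 ⟨hPd, hdisj𝓔 P hP Ei hEi hPEi⟩
        · intro u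
          by_cases hgood : G.Good u
          · exact vertexBimodal_of_short G _ u (le_of_eq (hdeg u hgood))
          by_cases huv : u = v
          · subst huv
            exact v_case G u Ei e he b hb hde harc' F' heF' hF'nE
              ((ctb_transfer G G' Ei e hrot F' hF'nE u).2 (hF'bim u))
          · rw [vertexBimodal_iff_ctb]
            have hfilt : (G.rot u).filter (fun d => decide (d.1 ∈ F' ∪ Ei))
                = (G.rot u).filter (fun d => decide (d.1 ∈ F')) := by
              refine List.filter_congr fun d hd => decide_eq_decide.2 ?_
              rw [Finset.mem_union]
              constructor
              · rintro (h1 | h1)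
                · exact h1
                · by_cases hde' : d.1 = e
                  · exact hde' ▸ heF'
                  · exact absurd (Finset.mem_erase.2 ⟨hde', h1⟩) (hnodart u huv hgood d hd)
              · exact Or.inl
            rw [hfilt, ← vertexBimodal_iff_ctb]
            exact (ctb_transfer G G' Ei e hrot F' hF'nE u).2 (hF'bim u)
      have hsumB : ∑ f ∈ F' ∪ Ei, w f = ∑ f ∈ F', w' f := by
        have hdisjU : Disjoint F' (Ei.erase e) := Finset.disjoint_left.2 hF'nE
        have hunion : F' ∪ Ei = F' ∪ (Ei.erase e) := by
          ext f
          simp only [Finset.mem_union, Finset.mem_erase]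
          constructor
          · rintro (h1 | h1)
            · exact Or.inl h1
            · by_cases hfe : f = e
              · exact Or.inl (hfe ▸ heF')
              · exact Or.inr ⟨hfe, h1⟩
          · rintro (h1 | ⟨_, h1⟩)
            · exact Or.inl h1
            · exact Or.inr h1
        rw [hunion, Finset.sum_union hdisjU]
        have h1 : ∑ f ∈ F', w f = w e + ∑ f ∈ F'.erase e, w f :=
          (Finset.add_sum_erase _ _ heF').symm
        have h2 : ∑ f ∈ F', w' f = w' e + ∑ f ∈ F'.erase e, w' f :=
          (Finset.add_sum_erase _ _ heF').symm
        have h3 : ∑ f ∈ F'.erase e, w' f = ∑ f ∈ F'.erase e, w f :=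
          Finset.sum_congr rfl fun f hf => hw'o f (Finset.mem_erase.1 hf).1
        have h4 : ∑ f ∈ Ei, w f = w e + ∑ f ∈ Ei.erase e, w f :=
          (Finset.add_sum_erase _ _ he).symm
        rw [h1, h2, h3, hw'e, h4]
        ring
      calc m' = ∑ f ∈ F', w' f := hsum'.symm
        _ = ∑ f ∈ F' ∪ Ei, w f := hsumB.symm
        _ ≤ m := hm.2 ⟨F' ∪ Ei, hfeas, rfl⟩
    · have hfeas : G.CutFeasible 𝓔 F' := by
        refine ⟨hF'GE, ?_, ?_⟩
        · intro P hP
          by_cases hPEi : P = Ei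
          · subst hPEi
            right
            rw [Finset.disjoint_left]
            intro f hf hf'
            by_cases hfe : f = e
            · exact heF' (hfe ▸ hf')
            · exact hF'nE f hf' (Finset.mem_erase.2 ⟨hfe, hf⟩)
          · have hP' : P ∈ 𝓔' := by
              rw [h𝓔']
              exact Finset.mem_insert_of_mem (Finset.mem_erase.2 ⟨hPEi, hP⟩)
            rcases hF'parts P hP' with h1 | h1
            · left; exact h1
            · right; exact h1
        · intro u
          exact (ctb_transfer G G' Ei e hrot F' hF'nE u).2 (hF'bim u)
      have hsumB : ∑ f ∈ F', w f = ∑ f ∈ F', w' f :=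
        Finset.sum_congr rfl fun f hf => (hw'o f (fun hc => heF' (hc ▸ hf))).symm
      calc m' = ∑ f ∈ F', w' f := hsum'.symm
        _ = ∑ f ∈ F', w f := hsumB.symm
        _ ≤ m := hm.2 ⟨F', hfeas, rfl⟩
  exact le_antisymm hdirB hdirA
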